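/- Let H be a complex Hilbert space, 𝔎 a unitary operator with 𝔎³ = Id, and E ⊆ H a 2-dimensional subspace invariant under 𝔎 and under a second operator 𝔄 (antiunitary, commuting with the relevant structure) that maps the 𝔎-eigenspace H_τ into H_τ̄ and H_τ̄ into H_τ and fixes H₁ setwise. Then either E ⊆ H₁ or E ⊆ H_τ ⊕ H_τ̄, where H_σ is the σ-eigenspace of 𝔎 for σ ∈ {1, τ, τ̄}, τ = e^{2πi/3}. -/

import Mathlib

/-- `τ = e^{2πi/3}`. -/
noncomputable def τ : ℂ := Complex.exp (2 * Real.pi * Complex.I / 3)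

lemma tau_cube : τ ^ 3 = 1 := by
  rw [τ, ← Complex.exp_nat_mul]
  rw [show (3:ℕ) * (2 * Real.pi * Complex.I / 3) = 2 * Real.pi * Complex.I by push_cast; ring]
  exact Complex.exp_two_pi_mul_I

lemma tau_ne_one : τ ≠ 1 := by
  intro h
  rw [τ, Complex.exp_eq_one_iff] at h
  obtain ⟨n, hn⟩ := h
  have hπ : (Real.pi : ℂ) ≠ 0 := by exact_mod_cast Real.pi_ne_zero
  have hI : Complex.I ≠ 0 := Complex.I_ne_zero
  have h2 : ((3:ℂ) * n) = 1 := by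
    have hne : 2 * (Real.pi:ℂ) * Complex.I ≠ 0 := by
      simp [Real.pi_ne_zero, Complex.I_ne_zero]
    field_simp at hn
    exact hn.symm
  have : (3 * n : ℤ) = 1 := by exact_mod_cast h2
  omega

lemma tau_ne_zero : τ ≠ 0 := by
  intro h; have := tau_cube; rw [h] at this; norm_num at this

lemma conj_tau : (starRingEnd ℂ) τ = τ ^ 2 := by
  have habs : ‖τ‖ = 1 := by
    rw [τ, Complex.norm_exp]
    norm_num [Complex.div_re, Complex.mul_re, Complex.I_re, Complex.I_im]
  have h1 : τ * (starRingEnd ℂ) τ = 1 := by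
    rw [Complex.mul_conj, Complex.normSq_eq_norm_sq, habs]; norm_num
  exact mul_left_cancel₀ tau_ne_zero (by rw [h1]; linear_combination - tau_cube)

lemma tau_sum : 1 + τ + τ ^ 2 = 0 := by
  have h : (τ - 1) * (1 + τ + τ ^ 2) = 0 := by linear_combination tau_cube
  rcases mul_eq_zero.mp h with h | h
  · exact absurd (sub_eq_zero.mp h) tau_ne_one
  · exact h

/-- Three nonzero eigenvectors with eigenvalues `1, τ, τ²` cannot all lie in a
2-dimensional subspace. -/
lemma no_three_eigenvectors {H : Type*} [NormedAddCommGroup H] [InnerProductSpace ℂ H]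
    (U : H →ₗᵢ[ℂ] H) (E : Submodule ℂ H) (hdim : Module.finrank ℂ E = 2)
    (u v w : H) (hu : u ∈ E) (hv : v ∈ E) (hw : w ∈ E)
    (hu0 : u ≠ 0) (hv0 : v ≠ 0) (hw0 : w ≠ 0)
    (hUu : U u = u) (hUv : U v = τ • v) (hUw : U w = τ ^ 2 • w) : False := by
  have e2 : τ ^ 2 = -1 - τ := by linear_combination tau_sum
  have e3 : τ ^ 3 = 1 := tau_cube
  have e4 : τ ^ 4 = τ := by linear_combination τ * tau_cube
  have e5 : τ ^ 5 = -1 - τ := by linear_combination (τ^2) * tau_cube + tau_sum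
  have e6 : τ ^ 6 = 1 := by linear_combination (τ^3 + 1) * tau_cube
  -- the three vectors are linearly independent in H
  have hLI : LinearIndependent ℂ ![u, v, w] := by
    rw [Fintype.linearIndependent_iff]
    intro g hg
    simp only [Fin.sum_univ_three, Matrix.cons_val_zero, Matrix.cons_val_one,
      Matrix.head_cons, Matrix.cons_val_two, Matrix.tail_cons] at hg
    have e0 : g 0 • u + g 1 • v + g 2 • w = 0 := hg
    have e1 : g 0 • u + (g 1 * τ) • v + (g 2 * τ ^ 2) • w = 0 := by
      have := congrArg U e0
      simpa only [map_add, map_smul, hUu, hUv, hUw, map_zero, smul_smul] using this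
    have e2'' : g 0 • u + (g 1 * τ * τ) • v + (g 2 * τ ^ 2 * τ ^ 2) • w = 0 := by
      have := congrArg U e1
      simpa only [map_add, map_smul, hUu, hUv, hUw, map_zero, smul_smul] using this
    have e2' : g 0 • u + (g 1 * τ ^ 2) • v + (g 2 * τ ^ 4) • w = 0 := by
      rw [show g 1 * τ ^ 2 = g 1 * τ * τ from by ring,
        show g 2 * τ ^ 4 = g 2 * τ ^ 2 * τ ^ 2 from by ring]
      exact e2''
    have key0 : ((3:ℂ) * g 0) • u + (g 1 * (1 + τ + τ ^ 2)) • v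
        + (g 2 * (1 + τ ^ 2 + τ ^ 4)) • w =
        (g 0 • u + g 1 • v + g 2 • w) + (g 0 • u + (g 1 * τ) • v + (g 2 * τ ^ 2) • w)
        + (g 0 • u + (g 1 * τ ^ 2) • v + (g 2 * τ ^ 4) • w) := by module
    rw [e0, e1, e2'] at key0
    have hz1 : (1:ℂ) + τ + τ ^ 2 = 0 := tau_sum
    have hz2 : (1:ℂ) + τ ^ 2 + τ ^ 4 = 0 := by linear_combination tau_sum + τ * tau_cube
    rw [hz1, hz2] at key0
    simp only [mul_zero, zero_smul, add_zero, zero_add] at key0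
    have hg0 : g 0 = 0 := by
      rcases smul_eq_zero.mp key0 with h | h
      · exact (mul_eq_zero.mp h).resolve_left (by norm_num)
      · exact absurd h hu0
    have key1 : (g 0 * (1 + τ ^ 2 + τ)) • u + (g 1 * (1 + τ ^ 3 + τ ^ 3)) • v
        + (g 2 * (1 + τ ^ 4 + τ ^ 5)) • w =
        (g 0 • u + g 1 • v + g 2 • w) + τ ^ 2 • (g 0 • u + (g 1 * τ) • v + (g 2 * τ ^ 2) • w)
        + τ • (g 0 • u + (g 1 * τ ^ 2) • v + (g 2 * τ ^ 4) • w) := by module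
    rw [e0, e1, e2'] at key1
    have hz3 : (1:ℂ) + τ ^ 2 + τ = 0 := by linear_combination tau_sum
    have hz4 : (1:ℂ) + τ ^ 3 + τ ^ 3 = 3 := by linear_combination 2 * tau_cube
    have hz5 : (1:ℂ) + τ ^ 4 + τ ^ 5 = 0 := by
      linear_combination tau_sum + (τ + τ ^ 2) * tau_cube
    rw [hz3, hz4, hz5] at key1
    simp only [mul_zero, zero_smul, add_zero, zero_add, smul_zero] at key1
    have hg1 : g 1 = 0 := by
      rcases smul_eq_zero.mp key1 with h | h
      · exact (mul_eq_zero.mp h).resolve_right (by norm_num)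
      · exact absurd h hv0
    have key2 : (g 0 * (1 + τ + τ ^ 2)) • u + (g 1 * (1 + τ ^ 2 + τ ^ 4)) • v
        + (g 2 * (1 + τ ^ 3 + τ ^ 6)) • w =
        (g 0 • u + g 1 • v + g 2 • w) + τ • (g 0 • u + (g 1 * τ) • v + (g 2 * τ ^ 2) • w)
        + τ ^ 2 • (g 0 • u + (g 1 * τ ^ 2) • v + (g 2 * τ ^ 4) • w) := by module
    rw [e0, e1, e2'] at key2
    have hz6 : (1:ℂ) + τ ^ 3 + τ ^ 6 = 3 := by linear_combination (τ ^ 3 + 2) * tau_cube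
    rw [hz1, hz2, hz6] at key2
    simp only [mul_zero, zero_smul, add_zero, zero_add, smul_zero] at key2
    have hg2 : g 2 = 0 := by
      rcases smul_eq_zero.mp key2 with h | h
      · exact (mul_eq_zero.mp h).resolve_right (by norm_num)
      · exact absurd h hw0
    intro i
    fin_cases i <;> assumption
  -- transfer to E and contradict the dimension
  haveI : FiniteDimensional ℂ E := FiniteDimensional.of_finrank_eq_succ hdim
  have hLI' : LinearIndependent ℂ
      (fun i : Fin 3 => (![(⟨u, hu⟩ : E), ⟨v, hv⟩, ⟨w, hw⟩] i)) := by
    apply LinearIndependent.of_comp (E.subtype)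
    have : (E.subtype ∘ fun i : Fin 3 => (![(⟨u, hu⟩ : E), ⟨v, hv⟩, ⟨w, hw⟩] i))
        = ![u, v, w] := by
      funext i; fin_cases i <;> rfl
    rw [this]
    exact hLI
  have := hLI'.fintype_card_le_finrank
  rw [hdim] at this
  simp at this

/-- A 2-dimensional subspace `E` invariant under a cube-root-of-identity unitary `𝔎` and
an antiunitary `𝔄` (exchanging the `τ` and `τ̄` eigenspaces and preserving the
`1`-eigenspace) satisfies `E ⊆ H₁` or `E ⊆ H_τ ⊕ H_τ̄`. -/
theorem degenerate_eigenspace_dichotomy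
    {H : Type*} [NormedAddCommGroup H] [InnerProductSpace ℂ H]
    (U : H →ₗᵢ[ℂ] H) (hU3 : ∀ x, U (U (U x)) = x)
    (A : H → H)
    (hAadd : ∀ x y, A (x + y) = A x + A y)
    (hAsmul : ∀ (c : ℂ) (x : H), A (c • x) = (starRingEnd ℂ) c • A x)
    (hAinner : ∀ x y : H, (inner ℂ (A x) (A y) : ℂ) = (starRingEnd ℂ) (inner ℂ x y))
    (hAτ : ∀ x, U x = τ • x → U (A x) = (starRingEnd ℂ) τ • A x)
    (hAτ' : ∀ x, U x = (starRingEnd ℂ) τ • x → U (A x) = τ • A x)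
    (hA1 : ∀ x, U x = x → U (A x) = A x)
    (E : Submodule ℂ H) (hdim : Module.finrank ℂ E = 2)
    (hEU : ∀ x ∈ E, U x ∈ E) (hEA : ∀ x ∈ E, A x ∈ E) :
    (∀ x ∈ E, U x = x) ∨
    (∀ x ∈ E, ∃ y z : H, U y = τ • y ∧ U z = (starRingEnd ℂ) τ • z ∧ x = y + z) := by
  have e2 : τ ^ 2 = -1 - τ := by linear_combination tau_sum
  have e3 : τ ^ 3 = 1 := tau_cube
  have e4 : τ ^ 4 = τ := by linear_combination τ * tau_cube
  have e5 : τ ^ 5 = -1 - τ := by linear_combination (τ^2) * tau_cube + tau_sum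
  -- the three spectral projections
  have hP1 : ∀ x : H, U ((3:ℂ)⁻¹ • (x + U x + U (U x)))
      = (3:ℂ)⁻¹ • (x + U x + U (U x)) := by
    intro x
    simp only [map_smul, map_add, hU3]
    module
  have hPt : ∀ x : H, U ((3:ℂ)⁻¹ • (x + τ ^ 2 • U x + τ • U (U x)))
      = τ • ((3:ℂ)⁻¹ • (x + τ ^ 2 • U x + τ • U (U x))) := by
    intro x
    simp only [map_smul, map_add, hU3]
    match_scalars <;> (try simp only [e2, e3, e4, e5]) <;> (try ring_nf) <;> (try simp only [e2, e3, e4, e5]) <;> ring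
  have hPt' : ∀ x : H, U ((3:ℂ)⁻¹ • (x + τ • U x + τ ^ 2 • U (U x)))
      = τ ^ 2 • ((3:ℂ)⁻¹ • (x + τ • U x + τ ^ 2 • U (U x))) := by
    intro x
    simp only [map_smul, map_add, hU3]
    match_scalars <;> (try simp only [e2, e3, e4, e5]) <;> (try ring_nf) <;> (try simp only [e2, e3, e4, e5]) <;> ring
  have hdecomp : ∀ x : H, x = (3:ℂ)⁻¹ • (x + U x + U (U x))
      + (3:ℂ)⁻¹ • (x + τ ^ 2 • U x + τ • U (U x))
      + (3:ℂ)⁻¹ • (x + τ • U x + τ ^ 2 • U (U x)) := by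
    intro x
    match_scalars <;> (try simp only [e2, e3, e4, e5]) <;> (try ring_nf) <;> (try simp only [e2, e3, e4, e5]) <;> ring
  have hmem : ∀ x ∈ E, ∀ a b : ℂ, (3:ℂ)⁻¹ • (x + a • U x + b • U (U x)) ∈ E := by
    intro x hx a b
    exact E.smul_mem _ (E.add_mem (E.add_mem hx (E.smul_mem _ (hEU _ hx)))
      (E.smul_mem _ (hEU _ (hEU _ hx))))
  have hmem1 : ∀ x ∈ E, (3:ℂ)⁻¹ • (x + U x + U (U x)) ∈ E := by
    intro x hx
    exact E.smul_mem _ (E.add_mem (E.add_mem hx (hEU _ hx)) (hEU _ (hEU _ hx)))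
  have hA0 : ∀ x : H, A x = 0 → x = 0 := by
    intro x h
    have h3 := hAinner x x
    rw [h] at h3
    simp only [inner_zero_left] at h3
    have h4 := congrArg (starRingEnd ℂ) h3.symm
    simp only [map_zero, Complex.conj_conj] at h4
    exact inner_self_eq_zero.mp h4
  by_cases h1 : ∀ x ∈ E, U x = x
  · exact Or.inl h1
  · right
    push_neg at h1
    obtain ⟨a, ha, hUa⟩ := h1
    -- a has a nonzero component in the τ or τ̄ eigenspace
    have hvex : ∃ v : H, v ∈ E ∧ v ≠ 0 ∧ U v = τ • v := by
      by_cases hPta : (3:ℂ)⁻¹ • (a + τ ^ 2 • U a + τ • U (U a)) ≠ 0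
      · exact ⟨_, hmem a ha _ _, hPta, hPt a⟩
      · push_neg at hPta
        have hPta' : (3:ℂ)⁻¹ • (a + τ • U a + τ ^ 2 • U (U a)) ≠ 0 := by
          intro h0
          apply hUa
          have hd := hdecomp a
          rw [hPta, h0, add_zero, add_zero] at hd
          calc U a = U ((3:ℂ)⁻¹ • (a + U a + U (U a))) := by rw [← hd]
            _ = (3:ℂ)⁻¹ • (a + U a + U (U a)) := hP1 a
            _ = a := hd.symm
        refine ⟨A ((3:ℂ)⁻¹ • (a + τ • U a + τ ^ 2 • U (U a))),
          hEA _ (hmem a ha _ _), fun h0 => hPta' (hA0 _ h0), ?_⟩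
        apply hAτ'
        rw [conj_tau]
        exact hPt' a
    obtain ⟨v, hvE, hv0, hUv⟩ := hvex
    have hwE : A v ∈ E := hEA v hvE
    have hw0 : A v ≠ 0 := fun h0 => hv0 (hA0 _ h0)
    have hUw : U (A v) = τ ^ 2 • A v := by rw [← conj_tau]; exact hAτ v hUv
    intro x hx
    refine ⟨(3:ℂ)⁻¹ • (x + τ ^ 2 • U x + τ • U (U x)),
      (3:ℂ)⁻¹ • (x + τ • U x + τ ^ 2 • U (U x)), hPt x,
      by rw [conj_tau]; exact hPt' x, ?_⟩
    have hP1x : (3:ℂ)⁻¹ • (x + U x + U (U x)) = 0 := by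
      by_contra hu0
      exact no_three_eigenvectors U E hdim _ v (A v) (hmem1 x hx) hvE hwE
        hu0 hv0 hw0 (hP1 x) hUv hUw
    have hd := hdecomp x
    rw [hP1x, zero_add] at hd
    exact hd
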